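/- Let X be a locally path-connected topological space, let π : E → X be a covering map, let U be an open cover of X by path-connected sets, and let (φ_W)_{W ∈ U} be a partition of unity on X subordinate to U: each φ_W : X → [0,1] is continuous, φ_W vanishes outside W, the family of supports of the φ_W is locally finite, and Σ_{W∈U} φ_W(x) = 1 for every x ∈ X. For each pair (W, V) with W ∈ U and V a path component of π⁻¹(W), set ψ_{(W,V)} := Set.indicator V (φ_W ∘ π). Then each ψ_{(W,V)} : E → ℝ is continuous and nonnegative, ψ_{(W,V)} vanishes outside V, for every x̃ ∈ E only finitely many ψ_{(W,V)}(x̃) are nonzero, and Σ_{(W,V)} ψ_{(W,V)}(x̃) = 1 for every x̃ ∈ E. (The lifted family is a partition of unity subordinate to the lifted cover.) -/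

import Mathlib

/-- `V` is a path component of `A`: an equivalence class of points of `A` under
the relation "joined by a path lying inside `A`", regarded as a subset of the
ambient space. -/
def IsPathComponentIn {E : Type*} [TopologicalSpace E] (V A : Set E) : Prop :=
  ∃ x ∈ A, V = pathComponentIn A x

/-- The source of a local homeomorphism into a locally path-connected space is
locally path-connected. -/
lemma IsLocalHomeomorph.locPathConnectedSpace' {E X : Type*} [TopologicalSpace E]
    [TopologicalSpace X] [LocallyPathConnectedSpace X] {π : E → X} (hπ : IsLocalHomeomorph π) :
    LocallyPathConnectedSpace E := by
  rw [locallyPathConnectedSpace_iff_pathComponentIn_mem_nhds]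
  intro x u hu hxu
  obtain ⟨e, hxe, rfl⟩ := hπ x
  set t : Set X := e '' (u ∩ e.source) with ht
  have htopen : IsOpen t := e.isOpen_image_of_subset_source (hu.inter e.open_source)
    Set.inter_subset_right
  have hxt : e x ∈ t := ⟨x, ⟨hxu, hxe⟩, rfl⟩
  set c := pathComponentIn t (e x) with hc
  have hcopen : IsOpen c := htopen.pathComponentIn _
  have hct : c ⊆ t := pathComponentIn_subset
  have hcpc : IsPathConnected c := isPathConnected_pathComponentIn hxt
  have hcsub : c ⊆ e.target := fun y hy => by
    obtain ⟨z, ⟨_, hz⟩, rfl⟩ := hct hy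
    exact e.map_source hz
  set s : Set E := e.symm '' c with hs
  have hsopen : IsOpen s := e.symm.isOpen_image_of_subset_source hcopen
    (by rwa [e.symm_source])
  have hxs : x ∈ s := ⟨e x, mem_pathComponentIn_self hxt, e.left_inv hxe⟩
  have hspc : IsPathConnected s :=
    hcpc.image' (e.continuousOn_symm.mono hcsub)
  have hsu : s ⊆ u := by
    rintro _ ⟨y, hy, rfl⟩
    obtain ⟨z, ⟨hzu, hz⟩, rfl⟩ := hct hy
    rwa [e.left_inv hz]
  exact Filter.mem_of_superset (hsopen.mem_nhds hxs)
    (hspc.subset_pathComponentIn hxs hsu)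

theorem stmt8 {E X : Type*} [TopologicalSpace E] [TopologicalSpace X]
    [LocallyPathConnectedSpace X] (π : E → X) (hπ : IsCoveringMap π)
    (U : Set (Set X)) (hUopen : ∀ W ∈ U, IsOpen W)
    (hUpc : ∀ W ∈ U, IsPathConnected W)
    (hUcov : ∀ x : X, ∃ W ∈ U, x ∈ W)
    (φ : Set X → X → ℝ)
    (hcont : ∀ W ∈ U, Continuous (φ W))
    (hrange : ∀ W ∈ U, ∀ x : X, 0 ≤ φ W x ∧ φ W x ≤ 1)
    (hsupp : ∀ W ∈ U, ∀ x ∉ W, φ W x = 0)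
    (hlf : LocallyFinite (fun W : U => Function.support (φ W)))
    (hfin : ∀ x : X, {W | W ∈ U ∧ φ W x ≠ 0}.Finite)
    (hsum : ∀ x : X, ∑ᶠ W ∈ U, φ W x = 1)
    (P : Set (Set X × Set E))
    (hP : P = {p | p.1 ∈ U ∧ IsPathComponentIn p.2 (π ⁻¹' p.1)})
    (ψ : Set X × Set E → E → ℝ)
    (hψ : ∀ p, ψ p = Set.indicator p.2 (φ p.1 ∘ π)) :
    (∀ p ∈ P, Continuous (ψ p)) ∧
    (∀ p ∈ P, ∀ xt : E, 0 ≤ ψ p xt) ∧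
    (∀ p ∈ P, ∀ xt ∉ p.2, ψ p xt = 0) ∧
    (∀ xt : E, {p | p ∈ P ∧ ψ p xt ≠ 0}.Finite) ∧
    (∀ xt : E, ∑ᶠ p ∈ P, ψ p xt = 1) := by
  subst hP
  haveI : LocallyPathConnectedSpace E := hπ.isLocalHomeomorph.locPathConnectedSpace'
  have hπc : Continuous π := hπ.continuous
  -- membership in `P` implies openness of the component and a clopen-type frontier fact
  have hmem : ∀ (W : Set X) (V : Set E), W ∈ U → IsPathComponentIn V (π ⁻¹' W) →
      IsOpen V ∧ ∀ a ∈ frontier V, φ W (π a) = 0 := by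
    rintro W V hW ⟨y, hy, rfl⟩
    have hWopen : IsOpen (π ⁻¹' W) := (hUopen W hW).preimage hπc
    have hVopen : IsOpen (pathComponentIn (π ⁻¹' W) y) := hWopen.pathComponentIn _
    refine ⟨hVopen, fun a ha => ?_⟩
    have haW : π a ∉ W := by
      intro haW
      have haopen : IsOpen (pathComponentIn (π ⁻¹' W) a) := hWopen.pathComponentIn _
      have hamem : a ∈ pathComponentIn (π ⁻¹' W) a := mem_pathComponentIn_self haW
      have hacl : a ∈ closure (pathComponentIn (π ⁻¹' W) y) := ha.1
      obtain ⟨b, hb1, hb2⟩ := mem_closure_iff.mp hacl _ haopen hamem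
      have heq : pathComponentIn (π ⁻¹' W) b = pathComponentIn (π ⁻¹' W) y :=
        pathComponentIn_congr hb2
      have hav : a ∈ pathComponentIn (π ⁻¹' W) y := by
        rw [← heq, pathComponentIn_congr hb1]
        exact hamem
      exact ha.2 (by simpa [hVopen.interior_eq] using hav)
    exact hsupp W hW _ haW
  -- the key bijection between nonvanishing lifted functions and nonvanishing originals
  have hkey : ∀ xt : E,
      {p | p ∈ {p : Set X × Set E | p.1 ∈ U ∧ IsPathComponentIn p.2 (π ⁻¹' p.1)} ∧ ψ p xt ≠ 0}
      = (fun W : Set X => (W, pathComponentIn (π ⁻¹' W) xt)) ''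
          {W | W ∈ U ∧ φ W (π xt) ≠ 0} := by
    intro xt
    ext p
    constructor
    · rintro ⟨⟨hW, y, hy, hV⟩, hne⟩
      rw [hψ] at hne
      have hxt2 : xt ∈ p.2 := by
        by_contra h
        exact hne (Set.indicator_of_notMem h _)
      have hφ : φ p.1 (π xt) ≠ 0 := by
        rwa [Set.indicator_of_mem hxt2] at hne
      refine ⟨p.1, ⟨hW, hφ⟩, ?_⟩
      have heq : pathComponentIn (π ⁻¹' p.1) xt = pathComponentIn (π ⁻¹' p.1) y :=
        pathComponentIn_congr (hV ▸ hxt2)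
      exact Prod.ext rfl (by simp only; rw [heq, ← hV])
    · rintro ⟨W, ⟨hW, hφ⟩, rfl⟩
      have hxW : π xt ∈ W := by
        by_contra h
        exact hφ (hsupp W hW _ h)
      have hxtV : xt ∈ pathComponentIn (π ⁻¹' W) xt := mem_pathComponentIn_self (show xt ∈ π ⁻¹' W from hxW)
      refine ⟨⟨hW, xt, hxW, rfl⟩, ?_⟩
      rw [hψ]
      show (pathComponentIn (π ⁻¹' W) xt).indicator (φ W ∘ π) xt ≠ 0
      rw [Set.indicator_of_mem hxtV]
      exact hφ
  refine ⟨?_, ?_, ?_, ?_, ?_⟩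
  · rintro p ⟨hW, hpc⟩
    obtain ⟨-, hfr⟩ := hmem p.1 p.2 hW hpc
    rw [hψ]
    exact ((hcont _ hW).comp hπc).indicator hfr
  · rintro p ⟨hW, -⟩ xt
    rw [hψ]
    exact Set.indicator_nonneg (fun a _ => (hrange _ hW (π a)).1) xt
  · intro p _ xt hxt
    rw [hψ]
    exact Set.indicator_of_notMem hxt _
  · intro xt
    rw [hkey xt]
    exact (hfin (π xt)).image _
  · intro xt
    set g : Set X → Set X × Set E := fun W => (W, pathComponentIn (π ⁻¹' W) xt) with hg
    have hginj : Function.Injective g := fun a b hab => congrArg Prod.fst hab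
    have hs1 : {p : Set X × Set E | p.1 ∈ U ∧ IsPathComponentIn p.2 (π ⁻¹' p.1)}
        ∩ Function.support (fun p => ψ p xt)
        = {p | p ∈ {p : Set X × Set E | p.1 ∈ U ∧ IsPathComponentIn p.2 (π ⁻¹' p.1)} ∧
            ψ p xt ≠ 0} := by
      ext p; simp [Function.mem_support, and_assoc]
    have hs2 : U ∩ Function.support (fun W => φ W (π xt)) = {W | W ∈ U ∧ φ W (π xt) ≠ 0} := by
      ext W; simp [Function.mem_support]
    have h3 : ∀ W ∈ {W | W ∈ U ∧ φ W (π xt) ≠ 0}, ψ (g W) xt = φ W (π xt) := by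
      rintro W ⟨hW, hφ⟩
      have hxW : π xt ∈ W := by
        by_contra h
        exact hφ (hsupp W hW _ h)
      rw [hψ]
      show (pathComponentIn (π ⁻¹' W) xt).indicator (φ W ∘ π) xt = φ W (π xt)
      rw [Set.indicator_of_mem (mem_pathComponentIn_self (show xt ∈ π ⁻¹' W from hxW))]
      rfl
    calc ∑ᶠ p ∈ {p : Set X × Set E | p.1 ∈ U ∧ IsPathComponentIn p.2 (π ⁻¹' p.1)}, ψ p xt
        = ∑ᶠ p ∈ ({p : Set X × Set E | p.1 ∈ U ∧ IsPathComponentIn p.2 (π ⁻¹' p.1)}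
            ∩ Function.support (fun p => ψ p xt)), ψ p xt := (finsum_mem_inter_support _ _).symm
      _ = ∑ᶠ p ∈ g '' {W | W ∈ U ∧ φ W (π xt) ≠ 0}, ψ p xt := by rw [hs1, hkey xt]
      _ = ∑ᶠ W ∈ {W | W ∈ U ∧ φ W (π xt) ≠ 0}, ψ (g W) xt :=
          finsum_mem_image (Set.injOn_of_injective hginj)
      _ = ∑ᶠ W ∈ {W | W ∈ U ∧ φ W (π xt) ≠ 0}, φ W (π xt) := finsum_mem_congr rfl h3
      _ = ∑ᶠ W ∈ U, φ W (π xt) := by rw [← hs2, finsum_mem_inter_support]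
      _ = 1 := hsum (π xt)
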